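/- For every r ≥ r₊, h′(r) − a²/(a² + r²) > 1 + 3M/r. In particular h′(r) > 0 for all r ≥ r₊. -/

import Mathlib

/-- The radius `r₊ = M + √(M² − a²)` of the Kerr event horizon. -/
noncomputable def rplus (M a : ℝ) : ℝ := M + Real.sqrt (M ^ 2 - a ^ 2)

/-- The height function `h` defining the hyperboloidal time function `τ = v − h(r)`. -/
noncomputable def hKerr (M a Cc : ℝ) (r : ℝ) : ℝ :=
  2 * (r - rplus M a) + 4 * M * Real.log (r / rplus M a)
    + 3 * M ^ 2 * (rplus M a - r) ^ 2 / (rplus M a * r ^ 2)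
    + 2 * M * Real.arctan ((Cc - 1) * M / r)
    - 2 * M * Real.arctan ((Cc - 1) * M / rplus M a)

lemma hasDerivAt_hKerr (M a Cc : ℝ) (r : ℝ) (hrp : 0 < rplus M a) (hr : 0 < r) :
    HasDerivAt (hKerr M a Cc)
      (2 + 4 * M / r + 6 * M ^ 2 * (r - rplus M a) / r ^ 3
        - 2 * M * ((Cc - 1) * M) / (r ^ 2 + ((Cc - 1) * M) ^ 2)) r := by
  have hrne : r ≠ 0 := hr.ne'
  have h1 : HasDerivAt (fun x : ℝ => 2 * (x - rplus M a)) 2 r := by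
    simpa using ((hasDerivAt_id r).sub_const (rplus M a)).const_mul 2
  have h2 := (((hasDerivAt_id r).div_const (rplus M a)).log
      (div_ne_zero hrne hrp.ne')).const_mul (4 * M)
  have hnum := (((hasDerivAt_const r (rplus M a)).sub (hasDerivAt_id r)).pow 2).const_mul
      (3 * M ^ 2)
  have hden := (hasDerivAt_pow 2 r).const_mul (rplus M a)
  have h3 := hnum.div hden (by positivity)
  have hdiv := (hasDerivAt_const r ((Cc - 1) * M)).div (hasDerivAt_id r) hrne
  have h4 := (hdiv.arctan).const_mul (2 * M)
  have h5 : HasDerivAt (fun _ : ℝ => 2 * M * Real.arctan ((Cc - 1) * M / rplus M a)) 0 r :=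
    hasDerivAt_const _ _
  have H := ((((h1.add h2).add h3).add h4).sub h5)
  have hEq : HasDerivAt (hKerr M a Cc) _ r := H
  convert hEq using 1
  have hk2 : (0:ℝ) < r ^ 2 + ((Cc - 1) * M) ^ 2 := by positivity
  have : (0:ℝ) < 1 + ((Cc - 1) * M / r) ^ 2 := by positivity
  simp only [id, Pi.div_apply, Pi.sub_apply, Pi.pow_apply]
  field_simp
  ring


/-- Strict lower bound `h′(r) − a²/(a² + r²) > 1 + 3M/r` for `r ≥ r₊`; in particular
`h′(r) > 0` there. -/
theorem hKerr_deriv_lower_bound (M a Cc : ℝ) (hM : 0 < M) (ha : |a| < M) (hCc : 1 ≤ Cc) :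
    ∀ r, rplus M a ≤ r →
      1 + 3 * M / r < deriv (hKerr M a Cc) r - a ^ 2 / (a ^ 2 + r ^ 2) ∧
      0 < deriv (hKerr M a Cc) r := by
  intro r hrr
  have hrp : 0 < rplus M a := by
    have := Real.sqrt_nonneg (M ^ 2 - a ^ 2)
    unfold rplus; linarith
  have hr : 0 < r := lt_of_lt_of_le hrp hrr
  have hk : 0 ≤ (Cc - 1) * M := mul_nonneg (by linarith) hM.le
  have hD := (hasDerivAt_hKerr M a Cc r hrp hr).deriv
  rw [hD]
  have hA : a ^ 2 / (a ^ 2 + r ^ 2) < 1 := by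
    rw [div_lt_one (by positivity)]; nlinarith
  have hB : 2 * M * ((Cc - 1) * M) / (r ^ 2 + ((Cc - 1) * M) ^ 2) ≤ M / r := by
    rw [div_le_div_iff₀ (by positivity) hr]
    nlinarith [sq_nonneg (r - (Cc - 1) * M), hM.le]
  have hC : 0 ≤ 6 * M ^ 2 * (r - rplus M a) / r ^ 3 :=
    div_nonneg (by nlinarith) (by positivity)
  have h4 : 4 * M / r = 3 * M / r + M / r := by ring
  have hApos : 0 ≤ a ^ 2 / (a ^ 2 + r ^ 2) := by positivity
  have hMr : 0 < M / r := by positivity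
  have hMr3 : 0 < 3 * M / r := by positivity
  constructor
  · linarith
  · linarith
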